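/- Let k ≤ l be positive integers and for each n define Λ_n = {λ > 0 : for every subset B of {1,...,nN*} with |B| ≥ 2, (λ/μ)·(|B|·(|B|−1))/((Σ_{i∈B} C_{(i)})·(nN*−1)) < 1}, where the multiset of capacities among the first nN* servers contains exactly nN*γ_j servers of capacity C_j. Then Λ_l ⊆ Λ_k. -/

import Mathlib

open Finset

lemma quad_aux (α R ca W β u w x : ℝ) (hα : 0 ≤ α) (hu : u ≤ x) (hw : x ≤ w)
    (h : 0 ≤ (x + R) * (x + R - 1) * α - (x * ca + W) * β) :
    0 ≤ (u + R) * (u + R - 1) * α - (u * ca + W) * β ∨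
    0 ≤ (w + R) * (w + R - 1) * α - (w * ca + W) * β := by
  by_contra hc
  push_neg at hc
  obtain ⟨h1, h2⟩ := hc
  have hwx : (0:ℝ) ≤ w - x := by linarith
  have hwu : (0:ℝ) ≤ w - u := by linarith
  obtain h3 | h3 := lt_or_ge u x
  · nlinarith [mul_nonneg hα (mul_nonneg (mul_nonneg hwx (by linarith : (0:ℝ) ≤ x - u)) hwu),
      mul_nonneg hwx (le_of_lt (neg_pos.mpr h1)),
      mul_pos (by linarith : (0:ℝ) < x - u) (neg_pos.mpr h2),
      mul_nonneg hwu h]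
  · have hux : u = x := le_antisymm hu h3
    rw [hux] at h1
    linarith

lemma vertex_aux (α β : ℝ) (hα : 0 ≤ α) (V : Finset ℝ) :
    ∀ (lo hi σ0 : ℝ → ℝ) (R W : ℝ),
    (∀ v ∈ V, lo v ≤ σ0 v ∧ σ0 v ≤ hi v) →
    0 ≤ ((∑ v ∈ V, σ0 v) + R) * ((∑ v ∈ V, σ0 v) + R - 1) * α -
        ((∑ v ∈ V, σ0 v * v) + W) * β →
    ∃ σ : ℝ → ℝ, (∀ v ∈ V, σ v = lo v ∨ σ v = hi v) ∧
      0 ≤ ((∑ v ∈ V, σ v) + R) * ((∑ v ∈ V, σ v) + R - 1) * α -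
          ((∑ v ∈ V, σ v * v) + W) * β := by
  classical
  induction V using Finset.induction_on with
  | empty =>
    intro lo hi σ0 R W _ h
    exact ⟨σ0, by simp, h⟩
  | @insert a s ha ih =>
    intro lo hi σ0 R W hbox h
    rw [Finset.sum_insert ha, Finset.sum_insert ha] at h
    obtain ⟨hloa, hhia⟩ := hbox a (mem_insert_self a s)
    have h' : 0 ≤ (σ0 a + ((∑ v ∈ s, σ0 v) + R)) * (σ0 a + ((∑ v ∈ s, σ0 v) + R) - 1) * α -
        (σ0 a * a + ((∑ v ∈ s, σ0 v * v) + W)) * β := by ring_nf; ring_nf at h; linarith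
    obtain hq | hq := quad_aux α ((∑ v ∈ s, σ0 v) + R) a ((∑ v ∈ s, σ0 v * v) + W) β
      (lo a) (hi a) (σ0 a) hα hloa hhia h'
    case inl =>
      obtain ⟨σ', hmem, hΦ⟩ := ih lo hi σ0 (lo a + R) (lo a * a + W)
        (fun v hv => hbox v (mem_insert_of_mem hv))
        (by ring_nf; ring_nf at hq; linarith)
      refine ⟨Function.update σ' a (lo a), ?_, ?_⟩
      · intro v hv
        rcases Finset.mem_insert.mp hv with rfl | hv
        · left; simp
        · have hne : v ≠ a := fun hva => ha (hva ▸ hv)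
          rw [Function.update_of_ne hne]
          exact hmem v hv
      · rw [Finset.sum_insert ha, Finset.sum_insert ha]
        have e1 : ∑ v ∈ s, Function.update σ' a (lo a) v = ∑ v ∈ s, σ' v :=
          Finset.sum_congr rfl (fun v hv =>
            Function.update_of_ne (fun hva : v = a => ha (hva ▸ hv)) _ _)
        have e2 : ∑ v ∈ s, Function.update σ' a (lo a) v * v = ∑ v ∈ s, σ' v * v :=
          Finset.sum_congr rfl (fun v hv => by
            rw [Function.update_of_ne (fun hva : v = a => ha (hva ▸ hv))])
        rw [e1, e2, Function.update_self]
        ring_nf; ring_nf at hΦ; linarith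
    case inr =>
      obtain ⟨σ', hmem, hΦ⟩ := ih lo hi σ0 (hi a + R) (hi a * a + W)
        (fun v hv => hbox v (mem_insert_of_mem hv))
        (by ring_nf; ring_nf at hq; linarith)
      refine ⟨Function.update σ' a (hi a), ?_, ?_⟩
      · intro v hv
        rcases Finset.mem_insert.mp hv with rfl | hv
        · right; simp
        · have hne : v ≠ a := fun hva => ha (hva ▸ hv)
          rw [Function.update_of_ne hne]
          exact hmem v hv
      · rw [Finset.sum_insert ha, Finset.sum_insert ha]
        have e1 : ∑ v ∈ s, Function.update σ' a (hi a) v = ∑ v ∈ s, σ' v :=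
          Finset.sum_congr rfl (fun v hv =>
            Function.update_of_ne (fun hva : v = a => ha (hva ▸ hv)) _ _)
        have e2 : ∑ v ∈ s, Function.update σ' a (hi a) v * v = ∑ v ∈ s, σ' v * v :=
          Finset.sum_congr rfl (fun v hv => by
            rw [Function.update_of_ne (fun hva : v = a => ha (hva ▸ hv))])
        rw [e1, e2, Function.update_self]
        ring_nf; ring_nf at hΦ; linarith

theorem stmt_17 (μ : ℝ) (hμ : 0 < μ) (M : ℕ) (hM : 1 ≤ M)
    (C γ : Fin M → ℝ) (hC : ∀ j, 0 < C j)
    (hγ0 : ∀ j, 0 < γ j) (hγ1 : ∀ j, γ j ≤ 1) (hγsum : ∑ j, γ j = 1)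
    (Nstar : ℕ) (hNstar : 2 < Nstar)
    (cap : ℕ → ℝ)
    (hcapval : ∀ i, ∃ j : Fin M, cap i = C j)
    (hprop : ∀ (n : ℕ) (j : Fin M),
      (((Finset.range (n * Nstar)).filter (fun i => cap i = C j)).card : ℝ) =
        (n : ℝ) * (Nstar : ℝ) * γ j)
    (Λ : ℕ → Set ℝ)
    (hΛ : ∀ n, Λ n = {lam : ℝ | 0 < lam ∧
      ∀ B : Finset ℕ, B ⊆ Finset.range (n * Nstar) → 2 ≤ B.card →
        lam / μ * ((B.card : ℝ) * ((B.card : ℝ) - 1)) /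
            ((∑ i ∈ B, cap i) * ((n * Nstar : ℕ) - 1 : ℝ)) < 1})
    (k l : ℕ) (hk : 0 < k) (hkl : k ≤ l) :
    Λ l ⊆ Λ k := by
  classical
  intro lam hlam
  rw [hΛ l] at hlam
  rw [hΛ k]
  obtain ⟨hlam0, hcon⟩ := hlam
  refine ⟨hlam0, ?_⟩
  intro B hB hB2
  -- basic facts
  have hcap_pos : ∀ i, 0 < cap i := fun i => by
    obtain ⟨j, hj⟩ := hcapval i; rw [hj]; exact hC j
  have hkR : (1:ℝ) ≤ (k:ℝ) := by exact_mod_cast hk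
  have hNR : (3:ℝ) ≤ (Nstar:ℝ) := by exact_mod_cast hNstar
  have hklR : (k:ℝ) ≤ (l:ℝ) := by exact_mod_cast hkl
  have hk0R : (0:ℝ) < (k:ℝ) := by linarith
  have hkN1 : (1:ℝ) < (k:ℝ) * Nstar := by nlinarith
  have hlN1 : (1:ℝ) < (l:ℝ) * Nstar := by nlinarith
  have hBne : B.Nonempty := Finset.card_pos.mp (by omega)
  have hS : 0 < ∑ i ∈ B, cap i := Finset.sum_pos (fun i _ => hcap_pos i) hBne
  have hbk : B.card ≤ k * Nstar := by
    simpa using Finset.card_le_card hB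
  set b : ℝ := (B.card : ℝ) with hbdef
  set S : ℝ := ∑ i ∈ B, cap i with hSdef
  have hb2R : (2:ℝ) ≤ b := by rw [hbdef]; exact_mod_cast hB2
  have hbkR : b ≤ (k:ℝ) * Nstar := by
    rw [hbdef]; exact_mod_cast hbk
  set V : Finset ℝ := B.image cap with hVdef
  set m : ℝ → ℕ := fun v => (B.filter (fun i => cap i = v)).card with hmdef
  set cl : ℝ → ℕ := fun v => ((Finset.range (l * Nstar)).filter (fun i => cap i = v)).card
    with hcldef
  have hmbN : ∑ v ∈ V, m v = B.card := (Finset.card_eq_sum_card_image cap B).symm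
  have hmS : ∑ v ∈ V, (m v : ℝ) * v = S := by
    rw [hSdef]
    refine Finset.sum_image' cap (fun i hi => ?_)
    have : ∀ x ∈ B.filter (fun j => cap j = cap i), cap x = cap i := fun x hx =>
      (Finset.mem_filter.mp hx).2
    rw [Finset.sum_congr rfl this, Finset.sum_const, nsmul_eq_mul]
  have hm1 : ∀ v ∈ V, 1 ≤ m v := by
    intro v hv
    obtain ⟨i, hiB, hiv⟩ := Finset.mem_image.mp hv
    have : i ∈ B.filter (fun j => cap j = v) := Finset.mem_filter.mpr ⟨hiB, hiv⟩
    exact Finset.card_pos.mpr ⟨i, this⟩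
  have hvpos : ∀ v ∈ V, 0 < v := by
    intro v hv
    obtain ⟨i, _, hiv⟩ := Finset.mem_image.mp hv
    rw [← hiv]; exact hcap_pos i
  have hscale : ∀ v ∈ V, (l:ℝ) * (m v) ≤ (k:ℝ) * (cl v) := by
    intro v hv
    obtain ⟨i, hiB, hiv⟩ := Finset.mem_image.mp hv
    obtain ⟨j, hj⟩ := hcapval i
    have hvj : v = C j := by rw [← hiv, hj]
    have hmle : (m v : ℝ) ≤ (k:ℝ) * Nstar * γ j := by
      rw [← hprop k j]
      have : B.filter (fun i => cap i = v) ⊆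
          (Finset.range (k * Nstar)).filter (fun i => cap i = C j) := by
        intro x hx
        obtain ⟨hx1, hx2⟩ := Finset.mem_filter.mp hx
        exact Finset.mem_filter.mpr ⟨hB hx1, by rw [← hvj]; exact hx2⟩
      exact_mod_cast Finset.card_le_card this
    have hcleq : (cl v : ℝ) = (l:ℝ) * Nstar * γ j := by
      rw [hcldef]
      simp only [hvj]
      exact hprop l j
    have hγj := hγ0 j
    calc (l:ℝ) * (m v) ≤ (l:ℝ) * ((k:ℝ) * Nstar * γ j) := by
          apply mul_le_mul_of_nonneg_left hmle (by linarith)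
      _ = (k:ℝ) * ((l:ℝ) * Nstar * γ j) := by ring
      _ = (k:ℝ) * (cl v) := by rw [hcleq]
  set σ0 : ℝ → ℝ := fun v => (l:ℝ) * (m v) / k with hσ0def
  set lo : ℝ → ℝ := fun v => ((⌊σ0 v⌋ : ℤ) : ℝ) with hlodef
  set hi : ℝ → ℝ := fun v => ((⌈σ0 v⌉ : ℤ) : ℝ) with hhidef
  have hbox : ∀ v ∈ V, lo v ≤ σ0 v ∧ σ0 v ≤ hi v := fun v _ =>
    ⟨Int.floor_le _, Int.le_ceil _⟩
  have hsum0 : ∑ v ∈ V, σ0 v = (l:ℝ) * b / k := by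
    rw [hσ0def]
    simp only
    rw [← Finset.sum_div, ← Finset.mul_sum]
    congr 2
    rw [hbdef, ← hmbN]
    exact (Nat.cast_sum V m).symm
  have hsumw0 : ∑ v ∈ V, σ0 v * v = (l:ℝ) * S / k := by
    have : ∀ v ∈ V, σ0 v * v = (l:ℝ) * ((m v : ℝ) * v) / k := fun v _ => by
      rw [hσ0def]; ring
    rw [Finset.sum_congr rfl this, ← Finset.sum_div, ← Finset.mul_sum, hmS]
  set α : ℝ := ((k:ℝ) * Nstar - 1) * S with hαdef
  set β : ℝ := b * (b - 1) * ((l:ℝ) * Nstar - 1) with hβdef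
  have hα : 0 ≤ α := mul_nonneg (by linarith) hS.le
  have hbase : 0 ≤ ((∑ v ∈ V, σ0 v) + 0) * ((∑ v ∈ V, σ0 v) + 0 - 1) * α -
      ((∑ v ∈ V, σ0 v * v) + 0) * β := by
    rw [hsum0, hsumw0]
    have key : ((l:ℝ) * b / k + 0) * ((l:ℝ) * b / k + 0 - 1) * α - ((l:ℝ) * S / k + 0) * β
        = (l:ℝ) * b * S * (((l:ℝ) - k) * ((k:ℝ) * Nstar - b)) / (k:ℝ)^2 := by
      rw [hαdef, hβdef]
      field_simp
      ring
    rw [key]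
    apply div_nonneg _ (by positivity)
    apply mul_nonneg (by positivity)
    apply mul_nonneg (by linarith) (by linarith)
  obtain ⟨σ, hσmem, hσΦ⟩ := vertex_aux α β hα V lo hi σ0 0 0 hbox hbase
  -- integrality and bounds of chosen vertex
  have hσ0ge : ∀ v ∈ V, (m v : ℝ) ≤ σ0 v := by
    intro v hv
    rw [hσ0def]
    simp only
    rw [le_div_iff₀ hk0R]
    nlinarith [Nat.cast_nonneg (α := ℝ) (m v)]
  have hfloor_geZ : ∀ v ∈ V, (m v : ℤ) ≤ ⌊σ0 v⌋ := fun v hv =>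
    Int.le_floor.mpr (by push_cast; exact hσ0ge v hv)
  have hceil_leZ : ∀ v ∈ V, ⌈σ0 v⌉ ≤ (cl v : ℤ) := by
    intro v hv
    refine Int.ceil_le.mpr ?_
    rw [hσ0def]
    simp only
    rw [div_le_iff₀ hk0R]
    push_cast
    linarith [hscale v hv]
  set n' : ℝ → ℕ := fun v => if σ v = lo v then (⌊σ0 v⌋).toNat else (⌈σ0 v⌉).toNat
    with hn'def
  have hfloor_nonneg : ∀ v ∈ V, (0:ℤ) ≤ ⌊σ0 v⌋ := fun v hv =>
    le_trans (by positivity) (hfloor_geZ v hv)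
  have hceil_nonneg : ∀ v ∈ V, (0:ℤ) ≤ ⌈σ0 v⌉ := fun v hv =>
    le_trans (hfloor_nonneg v hv) (Int.floor_le_ceil _)
  have hn'eq : ∀ v ∈ V, (n' v : ℝ) = σ v := by
    intro v hv
    by_cases h : σ v = lo v
    · have e : n' v = (⌊σ0 v⌋).toNat := by simp only [hn'def]; rw [if_pos h]
      rw [e, h]
      simp only [hlodef]
      exact_mod_cast congrArg (fun z : ℤ => (z : ℝ)) (Int.toNat_of_nonneg (hfloor_nonneg v hv))
    · have hσv : σ v = hi v := (hσmem v hv).resolve_left h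
      have e : n' v = (⌈σ0 v⌉).toNat := by simp only [hn'def]; rw [if_neg h]
      rw [e, hσv]
      simp only [hhidef]
      exact_mod_cast congrArg (fun z : ℤ => (z : ℝ)) (Int.toNat_of_nonneg (hceil_nonneg v hv))
  have hmn' : ∀ v ∈ V, m v ≤ n' v := by
    intro v hv
    have h1 : ((m v : ℤ) : ℝ) ≤ (n' v : ℝ) := by
      rw [hn'eq v hv]
      rcases hσmem v hv with hσv | hσv
      · rw [hσv]; simp only [hlodef]; exact_mod_cast hfloor_geZ v hv
      · rw [hσv]; simp only [hhidef]
        exact_mod_cast le_trans (hfloor_geZ v hv) (Int.floor_le_ceil _)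
    exact_mod_cast h1
  have hn'cl : ∀ v ∈ V, n' v ≤ cl v := by
    intro v hv
    have h1 : (n' v : ℝ) ≤ ((cl v : ℤ) : ℝ) := by
      rw [hn'eq v hv]
      rcases hσmem v hv with hσv | hσv
      · rw [hσv]; simp only [hlodef]
        exact_mod_cast le_trans (Int.floor_le_ceil _) (hceil_leZ v hv)
      · rw [hσv]; simp only [hhidef]; exact_mod_cast hceil_leZ v hv
    exact_mod_cast h1
  -- construct B'
  have hchoice : ∀ v ∈ V, ∃ t ⊆ (Finset.range (l * Nstar)).filter (fun i => cap i = v),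
      t.card = n' v := fun v hv => Finset.exists_subset_card_eq (hn'cl v hv)
  choose! F hFsub hFcard using hchoice
  set B' : Finset ℕ := V.biUnion F with hB'def
  have hcapF : ∀ v ∈ V, ∀ i ∈ F v, cap i = v := fun v hv i hiF =>
    (Finset.mem_filter.mp (hFsub v hv hiF)).2
  have hdisj : ∀ x ∈ V, ∀ y ∈ V, x ≠ y → Disjoint (F x) (F y) := by
    intro x hx y hy hxy
    rw [Finset.disjoint_left]
    intro i hix hiy
    exact hxy ((hcapF x hx i hix).symm.trans (hcapF y hy i hiy))
  have hB'card : B'.card = ∑ v ∈ V, n' v := by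
    rw [hB'def, Finset.card_biUnion hdisj]
    exact Finset.sum_congr rfl (fun v hv => hFcard v hv)
  have hB'sum : ∑ i ∈ B', cap i = ∑ v ∈ V, (n' v : ℝ) * v := by
    rw [hB'def, Finset.sum_biUnion (fun x hx y hy hxy => hdisj x hx y hy hxy)]
    refine Finset.sum_congr rfl (fun v hv => ?_)
    rw [Finset.sum_congr rfl (hcapF v hv), Finset.sum_const, hFcard v hv, nsmul_eq_mul]
  have hB'sub : B' ⊆ Finset.range (l * Nstar) := by
    intro i hi
    obtain ⟨v, hv, hiF⟩ := Finset.mem_biUnion.mp hi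
    exact (Finset.mem_filter.mp (hFsub v hv hiF)).1
  have hB'2 : 2 ≤ B'.card := by
    rw [hB'card]
    calc 2 ≤ B.card := hB2
      _ = ∑ v ∈ V, m v := hmbN.symm
      _ ≤ ∑ v ∈ V, n' v := Finset.sum_le_sum hmn'
  have hcon' := hcon B' hB'sub hB'2
  set b' : ℝ := (B'.card : ℝ) with hb'def
  set S' : ℝ := ∑ i ∈ B', cap i with hS'def
  have hb'sum : b' = ∑ v ∈ V, (n' v : ℝ) := by
    rw [hb'def, hB'card]; exact Nat.cast_sum V n'
  have hΦ' : 0 ≤ b' * (b' - 1) * α - S' * β := by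
    have e1 : ∑ v ∈ V, σ v = b' := by
      rw [hb'sum]
      exact Finset.sum_congr rfl (fun v hv => (hn'eq v hv).symm)
    have e2 : ∑ v ∈ V, σ v * v = S' := by
      rw [hB'sum]
      exact Finset.sum_congr rfl (fun v hv => by rw [hn'eq v hv])
    rw [e1, e2] at hσΦ
    simpa using hσΦ
  have hSS' : S ≤ S' := by
    rw [hB'sum, ← hmS]
    refine Finset.sum_le_sum (fun v hv => ?_)
    exact mul_le_mul_of_nonneg_right (by exact_mod_cast hmn' v hv) (hvpos v hv).le
  have hS'pos : 0 < S' := lt_of_lt_of_le hS hSS'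
  -- final algebra
  have hb'2 : (2:ℝ) ≤ b' := by rw [hb'def]; exact_mod_cast hB'2
  have hlNcast : ((l * Nstar : ℕ) : ℝ) = (l:ℝ) * Nstar := by push_cast; ring
  have hkNcast : ((k * Nstar : ℕ) : ℝ) = (k:ℝ) * Nstar := by push_cast; ring
  rw [hlNcast] at hcon'
  rw [hkNcast]
  have hden' : 0 < S' * ((l:ℝ) * Nstar - 1) := mul_pos hS'pos (by linarith)
  have hden : 0 < S * ((k:ℝ) * Nstar - 1) := mul_pos hS (by linarith)
  rw [div_lt_one hden'] at hcon'
  rw [div_lt_one hden]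
  have hX : 0 < lam / μ := div_pos hlam0 hμ
  -- hcon' : lam/μ * (b' * (b' - 1)) < S' * (l*Nstar - 1)
  -- hΦ' : b*(b-1)*(l*Nstar-1)*S' ≤ b'*(b'-1)*(k*Nstar-1)*S (after unfolding α β)
  have key : lam / μ * (b * (b - 1)) * (S' * ((l:ℝ) * Nstar - 1)) <
      S * ((k:ℝ) * Nstar - 1) * (S' * ((l:ℝ) * Nstar - 1)) := by
    have hΦ'' : S' * (b * (b - 1) * ((l:ℝ) * Nstar - 1)) ≤
        b' * (b' - 1) * (((k:ℝ) * Nstar - 1) * S) := by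
      rw [hαdef, hβdef] at hΦ'
      linarith [hΦ']
    have h0 := mul_le_mul_of_nonneg_left hΦ'' hX.le
    have h1 : lam / μ * (b * (b - 1)) * (S' * ((l:ℝ) * Nstar - 1)) ≤
        lam / μ * (b' * (b' - 1)) * (((k:ℝ) * Nstar - 1) * S) := by
      calc lam / μ * (b * (b - 1)) * (S' * ((l:ℝ) * Nstar - 1))
          = lam / μ * (S' * (b * (b - 1) * ((l:ℝ) * Nstar - 1))) := by ring
        _ ≤ lam / μ * (b' * (b' - 1) * (((k:ℝ) * Nstar - 1) * S)) := h0
        _ = lam / μ * (b' * (b' - 1)) * (((k:ℝ) * Nstar - 1) * S) := by ring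
    have h2 : lam / μ * (b' * (b' - 1)) * (((k:ℝ) * Nstar - 1) * S) <
        S' * ((l:ℝ) * Nstar - 1) * (((k:ℝ) * Nstar - 1) * S) :=
      mul_lt_mul_of_pos_right hcon' (mul_pos (by linarith) hS)
    calc lam / μ * (b * (b - 1)) * (S' * ((l:ℝ) * Nstar - 1)) ≤
        lam / μ * (b' * (b' - 1)) * (((k:ℝ) * Nstar - 1) * S) := h1
      _ < S' * ((l:ℝ) * Nstar - 1) * (((k:ℝ) * Nstar - 1) * S) := h2
      _ = S * ((k:ℝ) * Nstar - 1) * (S' * ((l:ℝ) * Nstar - 1)) := by ring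
  exact lt_of_mul_lt_mul_right key hden'.le
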